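/- The function θ⁽ⁿ⁾_σ(w|ζ) = Θ_{x²}(−σ ∏_a w_a⁻¹ ∏_j ζ_j) ∏_j z_j⁻ⁿ ∏_{a<b} w_a⁻¹ Θ_{x²}(w_a/w_b) is antisymmetric in the variables w: swapping w_a and w_b (a < b) negates its value, for all nonzero w₁,…,w_n. -/

import Mathlib

/-- Infinite product `(a; p)∞ = ∏_{k ≥ 0} (1 − a p^k)`. -/
noncomputable def poch (a p : ℂ) : ℂ := ∏' k : ℕ, (1 - a * p ^ k)

/-- Theta function `Θ_p(z) = (z; p)∞ (p z⁻¹; p)∞ (p; p)∞`. -/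
noncomputable def theta (p z : ℂ) : ℂ := poch z p * poch (p * z⁻¹) p * poch p p

/-- The candidate theta function
`θ⁽ⁿ⁾_σ(w|ζ) = Θ_{x²}(−σ ∏_a w_a⁻¹ ∏_j ζ_j) ∏_j z_j⁻ⁿ ∏_{a<b} w_a⁻¹ Θ_{x²}(w_a/w_b)`,
with `z_j = ζ_j²`. -/
noncomputable def thetaSol (n : ℕ) (x σ : ℂ) (w : Fin n → ℂ) (ζ : Fin (2 * n) → ℂ) : ℂ :=
  theta (x^2) (-σ * (∏ a, (w a)⁻¹) * ∏ j, ζ j) *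
  (∏ j, ((ζ j)^2)⁻¹ ^ n) *
  ∏ p ∈ Finset.univ.filter (fun p : Fin n × Fin n => p.1 < p.2),
    (w p.1)⁻¹ * theta (x^2) (w p.1 / w p.2)

open Finset Equiv Equiv.Perm in
/-- The factors `1 - a p^k` form a multipliable family when `|p| < 1`. -/
lemma multipliable_poch {a p : ℂ} (hp : ‖p‖ < 1) :
    Multipliable (fun k : ℕ => 1 - a * p ^ k) := by
  by_cases h : ∀ k : ℕ, 1 - a * p ^ k ≠ 0
  · refine Complex.multipliable_of_summable_log ?_
    have hs : Summable fun k : ℕ => a * p ^ k :=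
      (summable_geometric_of_norm_lt_one (by simpa using hp)).mul_left a
    exact hs.clog_one_sub
  · push_neg at h
    obtain ⟨k₀, hk₀⟩ := h
    refine ⟨0, ?_⟩
    have hev : ∀ᶠ s : Finset ℕ in Filter.atTop,
        (∏ i ∈ s, (1 - a * p ^ i)) = 0 := by
      filter_upwards [Filter.eventually_ge_atTop ({k₀} : Finset ℕ)] with s hs
      exact Finset.prod_eq_zero (hs (Finset.mem_singleton_self k₀)) hk₀
    exact Filter.Tendsto.congr' (hev.mono fun s hs => hs.symm) tendsto_const_nhds

/-- Peeling off the first factor of the Pochhammer product. -/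
lemma poch_peel {a p : ℂ} (hp : ‖p‖ < 1) :
    poch a p = (1 - a) * poch (a * p) p := by
  have heq : (fun k : ℕ => 1 - a * p ^ (k + 1)) = fun k => 1 - a * p * p ^ k := by
    funext k; rw [pow_succ']; ring
  have h2 : Multipliable (fun k : ℕ => 1 - a * p ^ (k + 1)) := by
    rw [heq]; exact multipliable_poch hp
  have h := tprod_eq_zero_mul' (f := fun k : ℕ => 1 - a * p ^ k) h2
  simp only [pow_zero, mul_one] at h
  rw [poch, h, heq]
  rfl

/-- The inversion identity `Θ_p(z⁻¹) = -z⁻¹ Θ_p(z)`. -/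
lemma theta_inv {p z : ℂ} (hp : ‖p‖ < 1) (hz : z ≠ 0) :
    theta p z⁻¹ = -z⁻¹ * theta p z := by
  unfold theta
  rw [inv_inv]
  rw [poch_peel hp (a := z⁻¹), poch_peel hp (a := z)]
  have h1 : (1 : ℂ) - z⁻¹ = -z⁻¹ * (1 - z) := by field_simp; ring
  rw [h1, mul_comm z⁻¹ p, mul_comm z p]
  ring

open Finset Equiv Equiv.Perm in
/-- Permuting the arguments of a product of an antisymmetric function over
all pairs `p.1 < p.2` multiplies the product by the sign of the permutation. -/
lemma prod_pairs_perm {n : ℕ} (g : Fin n → Fin n → ℂ)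
    (hg : ∀ i j, i ≠ j → g j i = -g i j) (τ : Equiv.Perm (Fin n)) :
    ∏ p ∈ Finset.univ.filter (fun p : Fin n × Fin n => p.1 < p.2), g (τ p.1) (τ p.2)
      = ((Equiv.Perm.signAux τ : ℤ) : ℂ) *
        ∏ p ∈ Finset.univ.filter (fun p : Fin n × Fin n => p.1 < p.2), g p.1 p.2 := by
  have conv : ∀ F : Fin n → Fin n → ℂ,
      ∏ p ∈ Finset.univ.filter (fun p : Fin n × Fin n => p.1 < p.2), F p.1 p.2
        = ∏ x ∈ finPairsLT n, F x.2 x.1 := by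
    intro F
    refine Finset.prod_nbij' (fun p => ⟨p.2, p.1⟩) (fun x => (x.2, x.1)) ?_ ?_ ?_ ?_ ?_ <;>
      simp [mem_finPairsLT, Finset.mem_filter]
  rw [conv fun i j => g (τ i) (τ j), conv g]
  have key : ∀ x ∈ finPairsLT n, g (τ x.2) (τ x.1) =
      (if τ x.1 ≤ τ x.2 then (-1 : ℂ) else 1) *
        g (signBijAux τ x).2 (signBijAux τ x).1 := by
    intro x hx
    have hne : τ x.1 ≠ τ x.2 := fun h => (mem_finPairsLT.1 hx).ne (τ.injective h).symm
    unfold signBijAux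
    by_cases h : τ x.2 < τ x.1
    · rw [dif_pos h, if_neg h.not_ge]; ring
    · rw [dif_neg h, if_pos (le_of_not_gt h)]
      dsimp
      rw [hg (τ x.2) (τ x.1) (fun hh => hne hh.symm)]
      ring
  rw [Finset.prod_congr rfl key, Finset.prod_mul_distrib]
  congr 1
  · rw [Equiv.Perm.signAux]
    push_cast
    exact Finset.prod_congr rfl fun x _ => by split_ifs <;> simp
  · exact Finset.prod_nbij (signBijAux τ) signBijAux_mem signBijAux_injOn
      signBijAux_surj (fun x hx => rfl)

/-- Antisymmetry of `θ⁽ⁿ⁾_σ` in the `w`-variables: swapping `w_a` and `w_b`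
(`a < b`) negates the value. -/
theorem thetaSol_antisymm (n : ℕ) (hn : 2 ≤ n) (x σ : ℂ)
    (hx0 : x ≠ 0) (hx : ‖x‖ < 1) (hσ : σ = 1 ∨ σ = -1)
    (w : Fin n → ℂ) (ζ : Fin (2 * n) → ℂ)
    (hw : ∀ a, w a ≠ 0) (hζ : ∀ j, ζ j ≠ 0)
    (a b : Fin n) (hab : a < b) :
    thetaSol n x σ (w ∘ Equiv.swap a b) ζ = -thetaSol n x σ w ζ := by
  have hx2 : ‖x ^ 2‖ < 1 := by
    rw [norm_pow]
    exact pow_lt_one₀ (norm_nonneg x) hx two_ne_zero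
  set g : Fin n → Fin n → ℂ := fun i j => (w i)⁻¹ * theta (x ^ 2) (w i / w j) with hg_def
  have hg : ∀ i j, i ≠ j → g j i = -g i j := by
    intro i j hij
    have hwi := hw i
    have hwj := hw j
    have hdiv : w i / w j ≠ 0 := div_ne_zero hwi hwj
    have : theta (x ^ 2) (w j / w i) = -(w i / w j)⁻¹ * theta (x ^ 2) (w i / w j) := by
      rw [← theta_inv hx2 hdiv, inv_div]
    simp only [hg_def, this, inv_div]
    field_simp
  unfold thetaSol
  have hprodw : (∏ c, ((w ∘ Equiv.swap a b) c)⁻¹) = ∏ c, (w c)⁻¹ := by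
    simpa using Equiv.prod_comp (Equiv.swap a b) (fun i => (w i)⁻¹)
  rw [hprodw]
  have hpairs :
      (∏ p ∈ Finset.univ.filter (fun p : Fin n × Fin n => p.1 < p.2),
          ((w ∘ Equiv.swap a b) p.1)⁻¹ *
            theta (x ^ 2) ((w ∘ Equiv.swap a b) p.1 / (w ∘ Equiv.swap a b) p.2))
        = - ∏ p ∈ Finset.univ.filter (fun p : Fin n × Fin n => p.1 < p.2),
            (w p.1)⁻¹ * theta (x ^ 2) (w p.1 / w p.2) := by
    have := prod_pairs_perm g hg (Equiv.swap a b)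
    rw [Equiv.Perm.signAux_swap hab.ne] at this
    simpa [hg_def, Function.comp] using this
  rw [hpairs]
  ring
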